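/- Derivative-free OptimIST setup: let f : ℝⁿ → ℝ be differentiable with ∇f Lipschitz continuous on ℝⁿ with constant L ∈ (0,∞) and f bounded below; let η > 0, ζ > 0; let {x_k} ⊂ ℝⁿ, {ĝ_k} ⊂ ℝⁿ, {δ_k} ⊂ (0,∞) with f_k = f(x_k), g_k = ∇f(x_k), satisfying for every k ≥ 0: (i) f_{k+1} ≤ f_k; (ii) f_{k+1} ≤ max{f_k − ηδ_k², f(x_k − δ_k ĝ_k/‖ĝ_k‖)}, where ĝ_k/‖ĝ_k‖ is taken to be 0 if ĝ_k = 0; (iii) ‖ĝ_k − g_k‖ ≤ ζδ_k. Set μ = 2/(L + 2η + 4ζ). Then for every k ≥ 0 with δ_k ≤ μ‖g_k‖, one has ‖ĝ_k‖ ≥ ηδ_k and f_{k+1} ≤ f_k − ηδ_k², i.e., k belongs to the set K = {k ∈ ℕ : ‖ĝ_k‖ ≥ ηδ_k and f_{k+1} ≤ f_k − ηδ_k²}. -/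

import Mathlib

open Filter Topology InnerProductSpace

lemma descent_lemma {n : ℕ} (f : EuclideanSpace ℝ (Fin n) → ℝ)
    (hdiff : Differentiable ℝ f) (L : ℝ) (hL : 0 < L)
    (hlip : ∀ y z, ‖gradient f y - gradient f z‖ ≤ L * ‖y - z‖)
    (x v : EuclideanSpace ℝ (Fin n)) :
    f (x + v) ≤ f x + ⟪gradient f x, v⟫_ℝ + L / 2 * ‖v‖ ^ 2 := by
  have hgc : Continuous (fun y => gradient f y) := by
    refine (LipschitzWith.of_dist_le_mul (K := Real.toNNReal L) ?_).continuous
    intro y z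
    rw [dist_eq_norm, dist_eq_norm, Real.coe_toNNReal _ hL.le]
    exact hlip y z
  have hderiv : ∀ t : ℝ, HasDerivAt (fun t : ℝ => f (x + t • v))
      ⟪gradient f (x + t • v), v⟫_ℝ t := by
    intro t
    have h1 : HasDerivAt (fun t : ℝ => x + t • v) v t := by
      simpa using ((hasDerivAt_id t).smul_const v).const_add x
    have h2 := (hdiff (x + t • v)).hasGradientAt.hasFDerivAt
    exact (h2.comp_hasDerivAt t h1).congr_deriv (by simp)
  have hcont : Continuous (fun t : ℝ => ⟪gradient f (x + t • v), v⟫_ℝ) :=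
    Continuous.inner (hgc.comp (by continuity)) continuous_const
  have hint : f (x + v) - f x = ∫ t in (0:ℝ)..1, ⟪gradient f (x + t • v), v⟫_ℝ := by
    have := intervalIntegral.integral_eq_sub_of_hasDerivAt
      (fun t _ => hderiv t) (hcont.intervalIntegrable 0 1)
    simpa using this.symm
  have hbound : ∀ t ∈ Set.Icc (0:ℝ) 1,
      ⟪gradient f (x + t • v), v⟫_ℝ ≤ ⟪gradient f x, v⟫_ℝ + L * ‖v‖ ^ 2 * t := by
    intro t ht
    have h1 : ⟪gradient f (x + t • v) - gradient f x, v⟫_ℝ ≤ L * t * ‖v‖ ^ 2 := by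
      calc ⟪gradient f (x + t • v) - gradient f x, v⟫_ℝ
          ≤ ‖gradient f (x + t • v) - gradient f x‖ * ‖v‖ := real_inner_le_norm _ _
        _ ≤ (L * ‖x + t • v - x‖) * ‖v‖ := by
            have := hlip (x + t • v) x
            nlinarith [norm_nonneg v]
        _ = L * t * ‖v‖ ^ 2 := by
            rw [add_sub_cancel_left, norm_smul, Real.norm_eq_abs, abs_of_nonneg ht.1]; ring
    have h2 : ⟪gradient f (x + t • v), v⟫_ℝ
        = ⟪gradient f x, v⟫_ℝ + ⟪gradient f (x + t • v) - gradient f x, v⟫_ℝ := by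
      rw [← inner_add_left]
      congr 1
      abel
    rw [h2]; nlinarith
  have hIb : (∫ t in (0:ℝ)..1, ⟪gradient f (x + t • v), v⟫_ℝ)
      ≤ ∫ t in (0:ℝ)..1, (⟪gradient f x, v⟫_ℝ + L * ‖v‖ ^ 2 * t) := by
    apply intervalIntegral.integral_mono_on (by norm_num)
      (hcont.intervalIntegrable 0 1)
      ((continuous_const.add (continuous_const.mul continuous_id)).intervalIntegrable 0 1)
    exact hbound
  have hval : (∫ t in (0:ℝ)..1, (⟪gradient f x, v⟫_ℝ + L * ‖v‖ ^ 2 * t))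
      = ⟪gradient f x, v⟫_ℝ + L / 2 * ‖v‖ ^ 2 := by
    rw [intervalIntegral.integral_add (intervalIntegrable_const)
      (Continuous.intervalIntegrable (by continuity) 0 1),
      intervalIntegral.integral_const_mul, integral_id]
    simp; ring
  linarith [hint ▸ hIb, hval ▸ hIb]

set_option maxHeartbeats 1000000
/-- In the derivative-free OptimIST framework, whenever `δ k ≤ μ ‖∇f (x k)‖` with
`μ = 2/(L + 2η + 4ζ)`, iteration `k` is successful: `‖ghat k‖ ≥ η δ k` and
`f (x (k+1)) ≤ f (x k) - η δ k ^ 2`. -/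
theorem small_delta_implies_successful {n : ℕ}
    (f : EuclideanSpace ℝ (Fin n) → ℝ)
    (hdiff : Differentiable ℝ f)
    (L : ℝ) (hL : 0 < L)
    (hlip : ∀ y z, ‖gradient f y - gradient f z‖ ≤ L * ‖y - z‖)
    (hbdd : BddBelow (Set.range f))
    (η ζ : ℝ) (hη : 0 < η) (hζ : 0 < ζ)
    (x ghat : ℕ → EuclideanSpace ℝ (Fin n)) (δ : ℕ → ℝ) (hδ : ∀ k, 0 < δ k)
    (hmono : ∀ k, f (x (k + 1)) ≤ f (x k))
    (hsd : ∀ k, f (x (k + 1)) ≤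
      max (f (x k) - η * δ k ^ 2) (f (x k - (δ k / ‖ghat k‖) • ghat k)))
    (hacc : ∀ k, ‖ghat k - gradient f (x k)‖ ≤ ζ * δ k)
    (μ : ℝ) (hμ : μ = 2 / (L + 2 * η + 4 * ζ)) :
    ∀ k, δ k ≤ μ * ‖gradient f (x k)‖ →
      η * δ k ≤ ‖ghat k‖ ∧ f (x (k + 1)) ≤ f (x k) - η * δ k ^ 2 := by
  intro k hk
  set g := gradient f (x k) with hg
  set gh := ghat k with hgh
  set d := δ k with hd
  have hd0 : 0 < d := hδ k
  have hden : 0 < L + 2 * η + 4 * ζ := by linarith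
  have hμ0 : 0 < μ := by rw [hμ]; positivity
  -- from δ ≤ μ‖g‖ : ‖g‖ ≥ d (L+2η+4ζ)/2
  have hgl : d * (L + 2 * η + 4 * ζ) / 2 ≤ ‖g‖ := by
    rw [hμ] at hk
    have h2 : d * (L + 2 * η + 4 * ζ) ≤ 2 * ‖g‖ := by
      have h3 := mul_le_mul_of_nonneg_right hk hden.le
      calc d * (L + 2 * η + 4 * ζ) ≤ 2 / (L + 2 * η + 4 * ζ) * ‖g‖ * (L + 2 * η + 4 * ζ) := h3
        _ = 2 * ‖g‖ := by field_simp
    linarith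
  have haccn : ‖gh - g‖ ≤ ζ * d := hacc k
  -- ‖gh‖ ≥ ‖g‖ - ζ d
  have hgn : ‖g‖ - ζ * d ≤ ‖gh‖ := by
    have := norm_sub_norm_le gh g
    have h2 := norm_sub_rev gh g ▸ haccn
    have h3 := abs_norm_sub_norm_le gh g
    have := abs_le.mp (h3.trans haccn)
    linarith [this.1]
  have hkey : η * d ≤ ‖gh‖ := by nlinarith
  refine ⟨hkey, ?_⟩
  have hgh0 : 0 < ‖gh‖ := lt_of_lt_of_le (by positivity) hkey
  -- descent step
  set c : ℝ := d / ‖gh‖ with hc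
  have hc0 : 0 ≤ c := by positivity
  have hdes := descent_lemma f hdiff L hL hlip (x k) (-(c • gh))
  have hxv : x k + -(c • gh) = x k - c • gh := by abel
  rw [hxv] at hdes
  have hnv : ‖-(c • gh)‖ = d := by
    rw [norm_neg, norm_smul, Real.norm_eq_abs, abs_of_nonneg hc0, hc,
      div_mul_cancel₀ _ (ne_of_gt hgh0)]
  -- inner product bound
  have hinn : ⟪g, -(c • gh)⟫_ℝ ≤ -d * ‖g‖ + 2 * ζ * d ^ 2 := by
    have h1 : ⟪g, gh⟫_ℝ = ‖gh‖ ^ 2 - ⟪gh - g, gh⟫_ℝ := by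
      rw [inner_sub_left, real_inner_self_eq_norm_sq]; ring
    have h2 : ⟪gh - g, gh⟫_ℝ ≤ ζ * d * ‖gh‖ :=
      (real_inner_le_norm _ _).trans (by nlinarith)
    have hA : ‖gh‖ ^ 2 - ζ * d * ‖gh‖ ≤ ⟪g, gh⟫_ℝ := by rw [h1]; linarith
    have h4 : c * (‖gh‖ ^ 2 - ζ * d * ‖gh‖) = d * ‖gh‖ - ζ * d ^ 2 := by
      rw [hc]; field_simp
    have h5 := mul_le_mul_of_nonneg_left hA hc0
    have h6 := mul_le_mul_of_nonneg_left hgn hd0.le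
    rw [inner_neg_right, real_inner_smul_right]
    nlinarith
  -- conclude via hsd
  have hstep := hsd k
  have hright : f (x k - c • gh) ≤ f (x k) - η * d ^ 2 := by
    have := hdes
    have hub : f (x k) + ⟪g, -(c • gh)⟫_ℝ + L / 2 * ‖-(c • gh)‖ ^ 2
        ≤ f (x k) - η * d ^ 2 := by
      rw [hnv]
      have h7 : d ^ 2 * (L + 2 * η + 4 * ζ) / 2 ≤ d * ‖g‖ := by nlinarith
      nlinarith [hinn, h7]
    linarith
  calc f (x (k + 1)) ≤ max (f (x k) - η * d ^ 2) (f (x k - c • gh)) := hstep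
    _ ≤ f (x k) - η * d ^ 2 := max_le le_rfl hright
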